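/- Let ε = ±1, k_g, k_n, τ_g real constants not all zero, A = ![![0, k_g, -ε k_n], ![k_g, 0, ε τ_g], ![k_n, τ_g, 0]], and ω > 0. If exp(ωA) = I and the first row of ∫₀^ω (exp(sA) − I) ds equals (−ω, 0, 0), then τ_g = 0 and there exists a nonzero integer k with ε k_n² − k_g² = (2kπ/ω)². -/

import Mathlib

open Matrix

attribute [local instance] Matrix.linftyOpNormedRing Matrix.linftyOpNormedAlgebra

theorem exp_formula_aux (A : Matrix (Fin 3) (Fin 3) ℝ) (lam : ℝ)
    (hA3 : A * A * A = lam • A)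
    (f g : ℝ → ℝ) (hf0 : f 0 = 0) (hg0 : g 0 = 0)
    (hf : ∀ s, HasDerivAt f (1 + lam * g s) s)
    (hg : ∀ s, HasDerivAt g (f s) s) (s : ℝ) :
    NormedSpace.exp (s • A) = 1 + f s • A + g s • (A * A) := by
  set E : ℝ → Matrix (Fin 3) (Fin 3) ℝ := fun t => 1 + f t • A + g t • (A * A) with hE
  have hEderiv : ∀ t, HasDerivAt E (A * E t) t := by
    intro t
    have h1 : HasDerivAt (fun t => f t • A) ((1 + lam * g t) • A) t := (hf t).smul_const A
    have h2 : HasDerivAt (fun t => g t • (A * A)) (f t • (A * A)) t := (hg t).smul_const _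
    have h3 := ((hasDerivAt_const t (1 : Matrix (Fin 3) (Fin 3) ℝ)).add h1).add h2
    convert h3 using 1
    all_goals try rfl
    have h4 : A * (A * A) = lam • A := by rw [← mul_assoc]; exact hA3
    simp only [hE, mul_add, mul_one, mul_smul_comm, h4, smul_smul, add_smul, one_smul,
      zero_add]
    module
  have hu : ∀ t : ℝ, HasDerivAt (fun t : ℝ => NormedSpace.exp (-(t • A)))
      (-(A * NormedSpace.exp (-(t • A)))) t := by
    intro t
    have h := (hasDerivAt_exp_smul_const' (𝕂 := ℝ) A (-t)).scomp t (hasDerivAt_neg t)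
    simp [Function.comp_def] at h
    exact h
  set F : ℝ → Matrix (Fin 3) (Fin 3) ℝ :=
    fun t => NormedSpace.exp (-(t • A)) * E t with hF
  have hcomm : ∀ t : ℝ, Commute A (NormedSpace.exp (-(t • A))) :=
    fun t => (((Commute.refl A).smul_right t).neg_right).exp_right
  have hFd : ∀ t, HasDerivAt F 0 t := by
    intro t
    have h := (hu t).mul (hEderiv t)
    have heq : -(A * NormedSpace.exp (-(t • A))) * E t
        + NormedSpace.exp (-(t • A)) * (A * E t) = 0 := by
      rw [← mul_assoc, ← (hcomm t).eq, neg_mul, neg_add_cancel]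
    rwa [heq] at h
  have hconst : F s = F 0 :=
    is_const_of_deriv_eq_zero (fun t => (hFd t).differentiableAt)
      (fun t => (hFd t).deriv) s 0
  have hF0 : F 0 = 1 := by
    simp [hF, hE, hf0, hg0]
  have hinv : NormedSpace.exp (s • A) * NormedSpace.exp (-(s • A)) = 1 := by
    refine (NormedSpace.exp_add_of_commute ((Commute.refl (s • A)).neg_right)).symm.trans ?_
    simp
  calc NormedSpace.exp (s • A) = NormedSpace.exp (s • A) * F s := by
        rw [hconst, hF0, mul_one]
    _ = (NormedSpace.exp (s • A) * NormedSpace.exp (-(s • A))) * E s := by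
        rw [hF, mul_assoc]
    _ = E s := by rw [hinv, one_mul]

/-- Entrywise consequence of `exp (ω • A) = 1`. -/
theorem key_aux (A : Matrix (Fin 3) (Fin 3) ℝ) (lam : ℝ)
    (hA3 : A * A * A = lam • A)
    (f g : ℝ → ℝ) (hf0 : f 0 = 0) (hg0 : g 0 = 0)
    (hf : ∀ s, HasDerivAt f (1 + lam * g s) s)
    (hg : ∀ s, HasDerivAt g (f s) s) (ω : ℝ)
    (hmono : NormedSpace.exp (ω • A) = 1) (i j : Fin 3) :
    f ω * A i j + g ω * (A * A) i j = 0 := by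
  have heq := exp_formula_aux A lam hA3 f g hf0 hg0 hf hg ω
  rw [hmono] at heq
  have h := congrFun (congrFun heq i) j
  simp only [Matrix.add_apply, Matrix.smul_apply, smul_eq_mul] at h
  linarith

/-- The first-row integrals in terms of `f`, `g`. -/
theorem int_aux (A : Matrix (Fin 3) (Fin 3) ℝ) (lam : ℝ) (hlam : lam ≠ 0)
    (f g : ℝ → ℝ) (hf0 : f 0 = 0) (hg0 : g 0 = 0)
    (hf : ∀ s, HasDerivAt f (1 + lam * g s) s)
    (hg : ∀ s, HasDerivAt g (f s) s) (ω : ℝ)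
    (hexp : ∀ s : ℝ, NormedSpace.exp (s • A) = 1 + f s • A + g s • (A * A))
    (j : Fin 3) :
    (∫ s in (0:ℝ)..ω, (NormedSpace.exp (s • A) - 1) 0 j)
      = A 0 j * g ω + (A * A) 0 j * ((f ω - ω) / lam) := by
  have hfd : Differentiable ℝ f := fun s => (hf s).differentiableAt
  have hgd : Differentiable ℝ g := fun s => (hg s).differentiableAt
  have hfc : Continuous f := hfd.continuous
  have hgc : Continuous g := hgd.continuous
  have hIf : (∫ s in (0:ℝ)..ω, f s) = g ω := by
    rw [intervalIntegral.integral_eq_sub_of_hasDerivAt (fun t _ => hg t)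
      (hfc.intervalIntegrable 0 ω), hg0, sub_zero]
  have hG : ∀ t : ℝ, HasDerivAt (fun t => (f t - t) / lam) (g t) t := by
    intro t
    have h := ((hf t).sub (hasDerivAt_id t)).div_const lam
    convert h using 1
    all_goals try rfl
    field_simp
    ring
  have hIg : (∫ s in (0:ℝ)..ω, g s) = (f ω - ω) / lam := by
    rw [intervalIntegral.integral_eq_sub_of_hasDerivAt (fun t _ => hG t)
      (hgc.intervalIntegrable 0 ω), hf0]
    norm_num
  have hpt : ∀ s : ℝ, (NormedSpace.exp (s • A) - 1) 0 j
      = f s * A 0 j + g s * (A * A) 0 j := by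
    intro s
    rw [hexp s]
    simp only [Matrix.sub_apply, Matrix.add_apply, Matrix.smul_apply, smul_eq_mul]
    ring
  rw [intervalIntegral.integral_congr (g := fun s => f s * A 0 j + g s * (A * A) 0 j)
      (fun s _ => hpt s),
    intervalIntegral.integral_add (f := fun s => f s * A 0 j) (g := fun s => g s * (A * A) 0 j) ((hfc.mul continuous_const).intervalIntegrable 0 ω)
      ((hgc.mul continuous_const).intervalIntegrable 0 ω),
    intervalIntegral.integral_mul_const, intervalIntegral.integral_mul_const, hIf, hIg]
  ring

set_option maxHeartbeats 2000000 in
/-- Necessity direction of the closedness criterion: if `exp(ωA) = I` and the first row of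
`∫₀^ω (exp(sA) − I) ds` is `(−ω, 0, 0)`, then `τ_g = 0` and
`ε k_n² − k_g² = (2kπ/ω)²` for some nonzero integer `k`. -/
theorem stmt_10 (kg kn τg ε : ℝ) (hε : ε = 1 ∨ ε = -1)
    (hnz : ¬(kg = 0 ∧ kn = 0 ∧ τg = 0))
    (A : Matrix (Fin 3) (Fin 3) ℝ)
    (hA : A = !![0, kg, -ε * kn; kg, 0, ε * τg; kn, τg, 0])
    (ω : ℝ) (hω : 0 < ω)
    (hmono : NormedSpace.exp (ω • A) = 1)
    (h1 : (∫ s in (0:ℝ)..ω, (NormedSpace.exp (s • A) - 1) 0 0) = -ω)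
    (h2 : (∫ s in (0:ℝ)..ω, (NormedSpace.exp (s • A) - 1) 0 1) = 0)
    (h3 : (∫ s in (0:ℝ)..ω, (NormedSpace.exp (s • A) - 1) 0 2) = 0) :
    τg = 0 ∧ ∃ k : ℤ, k ≠ 0 ∧ ε * kn ^ 2 - kg ^ 2 = (2 * k * Real.pi / ω) ^ 2 := by
  have hεne : ε ≠ 0 := by rcases hε with rfl | rfl <;> norm_num
  have hωne : ω ≠ 0 := ne_of_gt hω
  set lam : ℝ := kg ^ 2 - ε * kn ^ 2 + ε * τg ^ 2 with hlam
  -- entry facts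
  have a00 : A 0 0 = 0 := by simp [hA]
  have a01 : A 0 1 = kg := by simp [hA]
  have a02 : A 0 2 = -ε * kn := by simp [hA]
  have a11 : A 1 1 = 0 := by simp [hA]
  have a22 : A 2 2 = 0 := by simp [hA]
  have e00 : (A * A) 0 0 = kg ^ 2 - ε * kn ^ 2 := by
    simp [hA, Matrix.mul_apply, Fin.sum_univ_three]; ring
  have e01 : (A * A) 0 1 = -(ε * kn * τg) := by
    simp [hA, Matrix.mul_apply, Fin.sum_univ_three]; try ring
  have e02 : (A * A) 0 2 = ε * kg * τg := by
    simp [hA, Matrix.mul_apply, Fin.sum_univ_three]; ring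
  have e11 : (A * A) 1 1 = kg ^ 2 + ε * τg ^ 2 := by
    simp [hA, Matrix.mul_apply, Fin.sum_univ_three]; ring
  have e22 : (A * A) 2 2 = ε * τg ^ 2 - ε * kn ^ 2 := by
    simp [hA, Matrix.mul_apply, Fin.sum_univ_three]; ring
  have hA3 : A * A * A = lam • A := by
    subst hA
    ext i j
    fin_cases i <;> fin_cases j <;>
      · simp [Matrix.mul_apply, Fin.sum_univ_three, hlam]
        try ring
  rcases lt_trichotomy lam 0 with hneg | hzero | hpos
  · -- main case : lam < 0
    set θ : ℝ := Real.sqrt (-lam) with hθdef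
    have hθ : 0 < θ := Real.sqrt_pos.2 (by linarith)
    have hθ2 : θ ^ 2 = -lam := Real.sq_sqrt (by linarith)
    have hθne : θ ≠ 0 := ne_of_gt hθ
    set f : ℝ → ℝ := fun s => Real.sin (θ * s) / θ with hfdef
    set g : ℝ → ℝ := fun s => (1 - Real.cos (θ * s)) / θ ^ 2 with hgdef
    have hf0 : f 0 = 0 := by simp [hfdef]
    have hg0 : g 0 = 0 := by simp [hgdef]
    have hf : ∀ s, HasDerivAt f (1 + lam * g s) s := by
      intro s
      have h := (((hasDerivAt_id s).const_mul θ).sin).div_const θ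
      convert h using 1
      all_goals try rfl
      rw [hgdef, show lam = -θ ^ 2 by linarith]
      simp only [id]
      field_simp
      ring
    have hg : ∀ s, HasDerivAt g (f s) s := by
      intro s
      have h := ((hasDerivAt_const s (1:ℝ)).sub (((hasDerivAt_id s).const_mul θ).cos)).div_const (θ ^ 2)
      convert h using 1
      all_goals try rfl
      rw [hfdef]
      simp only [id]
      field_simp
      ring
    have key := key_aux A lam hA3 f g hf0 hg0 hf hg ω hmono
    have k00 := key 0 0; have k11 := key 1 1; have k22 := key 2 2
    rw [a00, e00] at k00; rw [a11, e11] at k11; rw [a22, e22] at k22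
    have hgω : g ω = 0 := by
      have hsum : g ω * (2 * lam) = 0 := by rw [hlam]; linear_combination k00 + k11 + k22
      rcases mul_eq_zero.mp hsum with h | h
      · exact h
      · exfalso; linarith
    have hcos : Real.cos (θ * ω) = 1 := by
      rw [hgdef] at hgω
      field_simp at hgω
      linarith
    have hsin : Real.sin (θ * ω) = 0 := by
      have h := Real.sin_sq_add_cos_sq (θ * ω)
      have : Real.sin (θ * ω) ^ 2 = 0 := by rw [hcos] at h; nlinarith
      exact pow_eq_zero_iff (n := 2) (by norm_num) |>.mp this
    have hfω : f ω = 0 := by rw [hfdef]; simp [hsin]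
    obtain ⟨n, hn⟩ := (Real.cos_eq_one_iff (θ * ω)).mp hcos
    have hn0 : n ≠ 0 := by
      rintro rfl
      simp at hn
      rcases hn with h | h
      · exact hθne h
      · exact hωne h
    have hlamne : lam ≠ 0 := ne_of_lt hneg
    have hexp := exp_formula_aux A lam hA3 f g hf0 hg0 hf hg
    have i1 := int_aux A lam hlamne f g hf0 hg0 hf hg ω hexp 0
    have i2 := int_aux A lam hlamne f g hf0 hg0 hf hg ω hexp 1
    have i3 := int_aux A lam hlamne f g hf0 hg0 hf hg ω hexp 2
    rw [h1, a00, e00, hgω, hfω] at i1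
    rw [h2, a01, e01, hgω, hfω] at i2
    rw [h3, a02, e02, hgω, hfω] at i3
    -- i1 : -ω = 0 + (kg^2 - ε*kn^2) * ((0 - ω)/lam)
    have hlamne' : lam ≠ 0 := hlamne
    have hc : kg ^ 2 - ε * kn ^ 2 = lam := by
      have h' : (kg ^ 2 - ε * kn ^ 2) * ω / lam = ω := by linear_combination i1
      rw [div_eq_iff hlamne'] at h'
      exact mul_right_cancel₀ hωne (by linear_combination h')
    have hknτ : kn * τg = 0 := by
      have h' : ε * kn * τg * ω / lam = 0 := by linear_combination -i2
      rw [div_eq_iff hlamne'] at h'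
      have h'' : ε * ω * (kn * τg) = 0 := by linear_combination h'
      rcases mul_eq_zero.mp h'' with h | h
      · exact absurd h (mul_ne_zero hεne hωne)
      · exact h
    have hkgτ : kg * τg = 0 := by
      have h' : ε * kg * τg * ω / lam = 0 := by linear_combination i3
      rw [div_eq_iff hlamne'] at h'
      have h'' : ε * ω * (kg * τg) = 0 := by linear_combination h'
      rcases mul_eq_zero.mp h'' with h | h
      · exact absurd h (mul_ne_zero hεne hωne)
      · exact h
    have hτ : τg = 0 := by
      by_contra hτ
      have hkn : kn = 0 := by rcases mul_eq_zero.mp hknτ with h | h; exact h; exact absurd h hτ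
      have hkg : kg = 0 := by rcases mul_eq_zero.mp hkgτ with h | h; exact h; exact absurd h hτ
      rw [hkn, hkg] at hc
      simp at hc
      linarith
    refine ⟨hτ, n, hn0, ?_⟩
    have hθω : θ * ω = 2 * (n : ℝ) * Real.pi := by linarith [hn]
    have hval : ε * kn ^ 2 - kg ^ 2 = θ ^ 2 := by
      rw [hθ2, hlam, hτ]; ring
    rw [hval]
    rw [div_pow, eq_div_iff (by positivity)]
    calc θ ^ 2 * ω ^ 2 = (θ * ω) ^ 2 := by ring
      _ = (2 * (n : ℝ) * Real.pi) ^ 2 := by rw [hθω]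
  · -- lam = 0 : contradiction
    exfalso
    set f : ℝ → ℝ := fun s => s with hfdef
    set g : ℝ → ℝ := fun s => s ^ 2 / 2 with hgdef
    have hf0 : f 0 = 0 := rfl
    have hg0 : g 0 = 0 := by simp [hgdef]
    have hf : ∀ s, HasDerivAt f (1 + lam * g s) s := by
      intro s
      rw [hzero]
      convert hasDerivAt_id s using 1
      all_goals try rfl
      simp
    have hg : ∀ s, HasDerivAt g (f s) s := by
      intro s
      have h := (hasDerivAt_pow 2 s).div_const 2
      convert h using 1
      all_goals try rfl
      rw [hfdef]
      ring
    have key := key_aux A lam hA3 f g hf0 hg0 hf hg ω hmono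
    have k00 := key 0 0; have k11 := key 1 1; have k22 := key 2 2
    rw [a00, e00] at k00; rw [a11, e11] at k11; rw [a22, e22] at k22
    simp only [hfdef, hgdef] at k00 k11 k22
    have hω2 : (0:ℝ) < ω ^ 2 / 2 := by positivity
    have d1 : kg ^ 2 - ε * kn ^ 2 = 0 := by
      have := k00; nlinarith
    have d2 : kg ^ 2 + ε * τg ^ 2 = 0 := by nlinarith
    have d3 : ε * τg ^ 2 - ε * kn ^ 2 = 0 := by nlinarith
    have hsum : ε * (τg ^ 2 + kn ^ 2) = 0 := by nlinarith
    have h5 : τg ^ 2 + kn ^ 2 = 0 := by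
      rcases mul_eq_zero.mp hsum with h | h
      · exact absurd h hεne
      · exact h
    have hτ : τg = 0 := by nlinarith
    have hkn : kn = 0 := by nlinarith
    have hkg : kg = 0 := by nlinarith
    exact hnz ⟨hkg, hkn, hτ⟩
  · -- lam > 0 : contradiction
    exfalso
    set θ : ℝ := Real.sqrt lam with hθdef
    have hθ : 0 < θ := Real.sqrt_pos.2 hpos
    have hθ2 : θ ^ 2 = lam := Real.sq_sqrt (le_of_lt hpos)
    have hθne : θ ≠ 0 := ne_of_gt hθ
    set f : ℝ → ℝ := fun s => Real.sinh (θ * s) / θ with hfdef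
    set g : ℝ → ℝ := fun s => (Real.cosh (θ * s) - 1) / θ ^ 2 with hgdef
    have hf0 : f 0 = 0 := by simp [hfdef]
    have hg0 : g 0 = 0 := by simp [hgdef]
    have hf : ∀ s, HasDerivAt f (1 + lam * g s) s := by
      intro s
      have h := (((hasDerivAt_id s).const_mul θ).sinh).div_const θ
      convert h using 1
      all_goals try rfl
      rw [hgdef, show lam = θ ^ 2 by linarith]
      simp only [id]
      field_simp
      try ring
    have hg : ∀ s, HasDerivAt g (f s) s := by
      intro s
      have h := (((hasDerivAt_id s).const_mul θ).cosh.sub (hasDerivAt_const s (1:ℝ))).div_const (θ ^ 2)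
      convert h using 1
      all_goals try rfl
      rw [hfdef]
      simp only [id]
      field_simp
      ring
    have key := key_aux A lam hA3 f g hf0 hg0 hf hg ω hmono
    have k00 := key 0 0; have k11 := key 1 1; have k22 := key 2 2
    rw [a00, e00] at k00; rw [a11, e11] at k11; rw [a22, e22] at k22
    have hgω : g ω = 0 := by
      have hsum : g ω * (2 * lam) = 0 := by rw [hlam]; linear_combination k00 + k11 + k22
      rcases mul_eq_zero.mp hsum with h | h
      · exact h
      · exfalso; linarith
    have hcosh : Real.cosh (θ * ω) = 1 := by
      rw [hgdef] at hgω
      field_simp at hgω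
      linarith
    have : (1:ℝ) < Real.cosh (θ * ω) := Real.one_lt_cosh.mpr (by positivity)
    linarith
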